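/- Let γ < 0, p > 5, σ = (p+3)/(p-5), and φ ∈ H¹(ℝ). Define E_γ(φ) = (1/2)‖φ'‖_{L²}² − (γ/2)|φ(0)|² − (1/(p+1))‖φ‖_{L^{p+1}}^{p+1}, M(φ) = ‖φ‖_{L²}², P_γ(φ) = ‖φ'‖_{L²}² − (γ/2)|φ(0)|² − ((p-1)/(2(p+1)))‖φ‖_{L^{p+1}}^{p+1}, and ‖φ‖_H² = ‖φ'‖_{L²}² − γ|φ(0)|². If M(φ)^σ E_γ(φ) ≤ M(Q)^σ E₀(Q) and P_γ(φ) ≥ 0, then ‖φ‖_{L²}^σ ‖φ‖_H ≤ ‖Q‖_{L²}^σ ‖Q'‖_{L²}. -/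

import Mathlib

open Real MeasureTheory

/-- `∫ |φ'|²`. -/
noncomputable def gradSq (φ : ℝ → ℂ) : ℝ := ∫ x : ℝ, ‖deriv φ x‖ ^ 2

/-- `∫ |φ|²` (squared `L²` norm, the mass `M(φ)`). -/
noncomputable def l2Sq (φ : ℝ → ℂ) : ℝ := ∫ x : ℝ, ‖φ x‖ ^ 2

/-- `∫ |φ|^{p+1}` (the `L^{p+1}` norm to the power `p+1`). -/
noncomputable def lpP (p : ℝ) (φ : ℝ → ℂ) : ℝ := ∫ x : ℝ, ‖φ x‖ ^ (p + 1)

/-- The energy `E_γ(φ)`. -/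
noncomputable def Egam (γ p : ℝ) (φ : ℝ → ℂ) : ℝ :=
  (1 / 2) * gradSq φ - (γ / 2) * ‖φ 0‖ ^ 2 - (1 / (p + 1)) * lpP p φ

/-- The virial functional `P_γ(φ)`. -/
noncomputable def Pgam (γ p : ℝ) (φ : ℝ → ℂ) : ℝ :=
  gradSq φ - (γ / 2) * ‖φ 0‖ ^ 2 - ((p - 1) / (2 * (p + 1))) * lpP p φ

/-- `‖φ‖_H² = ‖φ'‖_{L²}² - γ|φ(0)|²`. -/
noncomputable def HnormSq (γ : ℝ) (φ : ℝ → ℂ) : ℝ := gradSq φ - γ * ‖φ 0‖ ^ 2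

/-- below the mass-energy threshold with `P_γ(φ) ≥ 0` one has
`‖φ‖_{L²}^σ ‖φ‖_H ≤ ‖Q‖_{L²}^σ ‖Q'‖_{L²}`. -/
theorem stmt5 (γ p σ : ℝ) (hγ : γ < 0) (hp : 5 < p) (hσ : σ = (p + 3) / (p - 5))
    (φ : ℝ → ℂ) (MQ gQ eQ : ℝ) (hMQ : 0 ≤ MQ) (hgQ : 0 ≤ gQ)
    (heQ : eQ = ((p - 5) / (2 * (p - 1))) * gQ ^ 2)
    (hME : (l2Sq φ) ^ σ * Egam γ p φ ≤ (MQ ^ 2) ^ σ * eQ)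
    (hP : 0 ≤ Pgam γ p φ) :
    (Real.sqrt (l2Sq φ)) ^ σ * Real.sqrt (HnormSq γ φ) ≤ MQ ^ σ * gQ := by
  set M := l2Sq φ with hMdef
  set H := HnormSq γ φ with hHdef
  have hM : 0 ≤ M := integral_nonneg fun x => by positivity
  have hg : 0 ≤ gradSq φ := integral_nonneg fun x => by positivity
  have ha : (0:ℝ) ≤ ‖φ 0‖ ^ 2 := by positivity
  have hγa : γ * ‖φ 0‖ ^ 2 ≤ 0 := mul_nonpos_of_nonpos_of_nonneg hγ.le ha
  have hH : 0 ≤ H := by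
    rw [hHdef]; unfold HnormSq; linarith
  set c : ℝ := (p - 5) / (2 * (p - 1)) with hcdef
  have hp1 : (0:ℝ) < p - 1 := by linarith
  have hp2 : (0:ℝ) < p + 1 := by linarith
  have hc : 0 < c := by
    apply div_pos <;> linarith
  -- key algebraic identity
  have key : Egam γ p φ - (2 / (p - 1)) * Pgam γ p φ
      = c * H - (γ / (p - 1)) * ‖φ 0‖ ^ 2 := by
    rw [hHdef, hcdef]; unfold Egam Pgam HnormSq
    field_simp
    ring
  have hE : c * H ≤ Egam γ p φ := by
    have h1 : 0 ≤ (2 / (p - 1)) * Pgam γ p φ :=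
      mul_nonneg (by positivity) hP
    have h2 : (γ / (p - 1)) * ‖φ 0‖ ^ 2 ≤ 0 :=
      mul_nonpos_of_nonpos_of_nonneg (div_nonpos_of_nonpos_of_nonneg hγ.le hp1.le) ha
    linarith
  have hMσ : (0:ℝ) ≤ M ^ σ := Real.rpow_nonneg hM σ
  have hchain : M ^ σ * (c * H) ≤ (MQ ^ 2) ^ σ * (c * gQ ^ 2) := by
    calc M ^ σ * (c * H) ≤ M ^ σ * Egam γ p φ := by
          exact mul_le_mul_of_nonneg_left hE hMσ
    _ ≤ (MQ ^ 2) ^ σ * eQ := hME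
    _ = (MQ ^ 2) ^ σ * (c * gQ ^ 2) := by rw [heQ, hcdef]
  have hfin : M ^ σ * H ≤ (MQ ^ 2) ^ σ * gQ ^ 2 := by
    have := hchain
    have h := (mul_le_mul_iff_right₀ hc).mp (by linarith [hchain] : c * (M ^ σ * H) ≤ c * ((MQ ^ 2) ^ σ * gQ ^ 2))
    exact h
  -- conclude by taking square roots
  have hLnn : 0 ≤ (Real.sqrt M) ^ σ * Real.sqrt H :=
    mul_nonneg (Real.rpow_nonneg (Real.sqrt_nonneg M) σ) (Real.sqrt_nonneg H)
  have hRnn : 0 ≤ MQ ^ σ * gQ := mul_nonneg (Real.rpow_nonneg hMQ σ) hgQ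
  have hLsq : ((Real.sqrt M) ^ σ * Real.sqrt H) ^ 2 = M ^ σ * H := by
    rw [mul_pow, Real.sq_sqrt hH, ← Real.rpow_natCast ((Real.sqrt M) ^ σ) 2,
      ← Real.rpow_mul (Real.sqrt_nonneg M), mul_comm σ ((2:ℕ):ℝ),
      Real.rpow_mul (Real.sqrt_nonneg M), Real.rpow_natCast, Real.sq_sqrt hM]
  have hRsq : (MQ ^ σ * gQ) ^ 2 = (MQ ^ 2) ^ σ * gQ ^ 2 := by
    rw [mul_pow, ← Real.rpow_natCast (MQ ^ σ) 2, ← Real.rpow_mul hMQ,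
      mul_comm σ ((2:ℕ):ℝ), Real.rpow_mul hMQ, Real.rpow_natCast]
  have hsq : ((Real.sqrt M) ^ σ * Real.sqrt H) ^ 2 ≤ (MQ ^ σ * gQ) ^ 2 := by
    rw [hLsq, hRsq]; exact hfin
  calc (Real.sqrt M) ^ σ * Real.sqrt H
      = Real.sqrt (((Real.sqrt M) ^ σ * Real.sqrt H) ^ 2) := (Real.sqrt_sq hLnn).symm
    _ ≤ Real.sqrt ((MQ ^ σ * gQ) ^ 2) := Real.sqrt_le_sqrt hsq
    _ = MQ ^ σ * gQ := Real.sqrt_sq hRnn
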